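/- arXiv:2506.01699 — 2 statements merged into one kernel-verified Lean document; each statement's English description precedes it below -/
import Mathlib

section
/- Let p be an odd prime. Identify F_p³ with symmetric 2×2 matrices over F_p via (a,b,ν) ↦ [[a,ν],[ν,b]], with Q equal to the determinant. The action of GL₂(F_p) on symmetric matrices given by h·M = det(h)⁻¹ · h M hᵗ is transitive on the set of nonzero symmetric matrices with determinant 0, and the stabilizer of [[1,0],[0,0]] is the subgroup generated by the unipotent matrix [[1,1],[0,1]] and the scalar matrices. -/
open Matrix

section aux
variable {K : Type*} [Field K]

noncomputable def myGL (A : Matrix (Fin 2) (Fin 2) K) (hA : A.det ≠ 0) : GL (Fin 2) K :=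
  Matrix.GeneralLinearGroup.mkOfDetNeZero A hA

@[simp] lemma myGL_coe (A : Matrix (Fin 2) (Fin 2) K) (hA : A.det ≠ 0) :
    ((myGL A hA : GL (Fin 2) K) : Matrix (Fin 2) (Fin 2) K) = A := rfl

lemma det_coe_mul_det_inv_coe (h : GL (Fin 2) K) :
    ((h⁻¹ : GL (Fin 2) K) : Matrix (Fin 2) (Fin 2) K).det *
      ((h : GL (Fin 2) K) : Matrix (Fin 2) (Fin 2) K).det = 1 := by
  rw [← Matrix.det_mul, ← Matrix.GeneralLinearGroup.coe_mul, inv_mul_cancel,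
    Matrix.GeneralLinearGroup.coe_one, Matrix.det_one]

lemma det_coe_ne_zero (h : GL (Fin 2) K) :
    ((h : GL (Fin 2) K) : Matrix (Fin 2) (Fin 2) K).det ≠ 0 := by
  intro h0
  have h1 := det_coe_mul_det_inv_coe h
  rw [h0, mul_zero] at h1
  exact zero_ne_one h1

lemma det_inv_coe (h : GL (Fin 2) K) :
    ((h⁻¹ : GL (Fin 2) K) : Matrix (Fin 2) (Fin 2) K).det
      = ((h : Matrix (Fin 2) (Fin 2) K).det)⁻¹ :=
  eq_inv_of_mul_eq_one_left (det_coe_mul_det_inv_coe h)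

noncomputable def act' (h : GL (Fin 2) K) (M : Matrix (Fin 2) (Fin 2) K) :
    Matrix (Fin 2) (Fin 2) K :=
  ((h⁻¹ : GL (Fin 2) K) : Matrix (Fin 2) (Fin 2) K).det •
    ((h : Matrix (Fin 2) (Fin 2) K) * M * ((h : Matrix (Fin 2) (Fin 2) K))ᵀ)

lemma act'_mul (g h : GL (Fin 2) K) (M : Matrix (Fin 2) (Fin 2) K) :
    act' (g * h) M = act' g (act' h M) := by
  simp only [act', det_inv_coe, Matrix.GeneralLinearGroup.coe_mul, Matrix.det_mul,
    Matrix.transpose_mul, Matrix.smul_mul, Matrix.mul_smul, smul_smul, mul_inv]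
  rw [mul_comm ((((g : GL (Fin 2) K) : Matrix (Fin 2) (Fin 2) K)).det)⁻¹]
  congr 1
  noncomm_ring

lemma act'_one (M : Matrix (Fin 2) (Fin 2) K) : act' (1 : GL (Fin 2) K) M = M := by
  simp [act']

lemma mulE (A : Matrix (Fin 2) (Fin 2) K) :
    A * !![(1:K),0;0,0] * Aᵀ
      = !![A 0 0 * A 0 0, A 0 0 * A 1 0; A 1 0 * A 0 0, A 1 0 * A 1 0] := by
  ext i j
  fin_cases i <;> fin_cases j <;>
    simp [Matrix.mul_apply, Fin.sum_univ_two]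

lemma act'_E (h : GL (Fin 2) K) :
    act' h !![(1:K),0;0,0]
      = (((h : Matrix (Fin 2) (Fin 2) K)).det)⁻¹ •
        !![(h : Matrix (Fin 2) (Fin 2) K) 0 0 * (h : Matrix (Fin 2) (Fin 2) K) 0 0,
            (h : Matrix (Fin 2) (Fin 2) K) 0 0 * (h : Matrix (Fin 2) (Fin 2) K) 1 0;
            (h : Matrix (Fin 2) (Fin 2) K) 1 0 * (h : Matrix (Fin 2) (Fin 2) K) 0 0,
            (h : Matrix (Fin 2) (Fin 2) K) 1 0 * (h : Matrix (Fin 2) (Fin 2) K) 1 0] := by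
  rw [act', det_inv_coe, mulE]

/-- every nonzero symmetric determinant-zero matrix is in the orbit of E -/
lemma orbit_E (M : Matrix (Fin 2) (Fin 2) K) (hM0 : M ≠ 0) (hMs : M.IsSymm)
    (hMd : M.det = 0) : ∃ h : GL (Fin 2) K, act' h !![(1:K),0;0,0] = M := by
  set a := M 0 0 with ha
  set b := M 1 1 with hb
  set ν := M 0 1 with hν
  have hsym : M 1 0 = ν := hMs.apply 0 1
  have hMeq : M = !![a, ν; ν, b] := by
    ext i j
    fin_cases i <;> fin_cases j <;> simp [hsym, ha, hb, hν]
  have hdet : a * b - ν * ν = 0 := by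
    rw [← hMd, Matrix.det_fin_two, hsym]
  by_cases hA : a ≠ 0
  · have hd : (!![a, 0; ν, 1] : Matrix (Fin 2) (Fin 2) K).det ≠ 0 := by
      simpa [Matrix.det_fin_two_of] using hA
    refine ⟨myGL _ hd, ?_⟩
    rw [act'_E, hMeq]
    ext i j
    fin_cases i <;> fin_cases j <;>
      simp [Matrix.det_fin_two_of, Matrix.smul_apply] <;>
      field_simp <;>
      linear_combination -hdet
  · push_neg at hA
    have hν0 : ν = 0 := by
      have h2 : ν * ν = 0 := by linear_combination -hdet + b * hA
      exact mul_self_eq_zero.mp h2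
    have hB : b ≠ 0 := by
      intro hb0
      apply hM0
      rw [hMeq, hA, hν0, hb0]
      ext i j; fin_cases i <;> fin_cases j <;> simp
    have hd : (!![0, -1; b, 0] : Matrix (Fin 2) (Fin 2) K).det ≠ 0 := by
      simpa [Matrix.det_fin_two_of] using hB
    refine ⟨myGL _ hd, ?_⟩
    rw [act'_E, hMeq, hA, hν0]
    ext i j
    fin_cases i <;> fin_cases j <;>
      simp [Matrix.det_fin_two_of, Matrix.smul_apply] <;>
      field_simp

lemma unipotent_pow (n : ℕ) :
    (!![(1:K), 1; 0, 1]) ^ n = !![(1:K), (n : K); 0, 1] := by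
  induction n with
  | zero => ext i j; fin_cases i <;> fin_cases j <;> simp
  | succ n ih =>
    rw [pow_succ, ih]
    ext i j
    fin_cases i <;> fin_cases j <;>
      simp [Matrix.mul_apply, Fin.sum_univ_two] <;> ring

end aux

/-- Let `p` be an odd prime. `GL₂(F_p)` acts on symmetric `2×2` matrices by
`h·M = det(h)⁻¹ · h M hᵗ`. This action is transitive on the nonzero symmetric
matrices of determinant `0`, and the stabilizer of `[[1,0],[0,0]]` is the subgroup
generated by the unipotent matrix `[[1,1],[0,1]]` and the scalar matrices. -/
theorem stmt_2 (p : ℕ) (hp : p.Prime) (hodd : Odd p) :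
    haveI : Fact p.Prime := ⟨hp⟩
    let act : GL (Fin 2) (ZMod p) → Matrix (Fin 2) (Fin 2) (ZMod p) →
        Matrix (Fin 2) (Fin 2) (ZMod p) :=
      fun h M =>
        ((h⁻¹ : GL (Fin 2) (ZMod p)) : Matrix (Fin 2) (Fin 2) (ZMod p)).det •
          ((h : Matrix (Fin 2) (Fin 2) (ZMod p)) * M *
            Matrix.transpose (h : Matrix (Fin 2) (Fin 2) (ZMod p)))
    (∀ M N : Matrix (Fin 2) (Fin 2) (ZMod p),
        M ≠ 0 → M.IsSymm → M.det = 0 → N ≠ 0 → N.IsSymm → N.det = 0 →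
        ∃ h : GL (Fin 2) (ZMod p), act h M = N)
    ∧ {h : GL (Fin 2) (ZMod p) | act h !![(1 : ZMod p), 0; 0, 0] = !![1, 0; 0, 0]}
        = (Subgroup.closure
            {h : GL (Fin 2) (ZMod p) |
              (h : Matrix (Fin 2) (Fin 2) (ZMod p)) = !![1, 1; 0, 1]
              ∨ ∃ c : ZMod p,
                  (h : Matrix (Fin 2) (Fin 2) (ZMod p))
                    = c • (1 : Matrix (Fin 2) (Fin 2) (ZMod p))} : Set _) := by
  haveI : Fact p.Prime := ⟨hp⟩
  intro act
  have hact : ∀ h M, act h M = act' h M := fun _ _ => rfl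
  constructor
  · intro M N hM0 hMs hMd hN0 hNs hNd
    obtain ⟨g, hg⟩ := orbit_E M hM0 hMs hMd
    obtain ⟨k, hk⟩ := orbit_E N hN0 hNs hNd
    refine ⟨k * g⁻¹, ?_⟩
    rw [hact, ← hg, ← act'_mul, mul_assoc, inv_mul_cancel, mul_one, hk]
  · set E : Matrix (Fin 2) (Fin 2) (ZMod p) := !![1, 0; 0, 0] with hE
    set gens : Set (GL (Fin 2) (ZMod p)) :=
      {h : GL (Fin 2) (ZMod p) |
        (h : Matrix (Fin 2) (Fin 2) (ZMod p)) = !![1, 1; 0, 1]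
        ∨ ∃ c : ZMod p,
            (h : Matrix (Fin 2) (Fin 2) (ZMod p))
              = c • (1 : Matrix (Fin 2) (Fin 2) (ZMod p))} with hgens
    let stab : Subgroup (GL (Fin 2) (ZMod p)) :=
      { carrier := {h | act' h E = E}
        one_mem' := act'_one E
        mul_mem' := by
          intro g h hg hh
          show act' (g * h) E = E
          rw [act'_mul]
          show act' g (act' h E) = E
          rw [hh, hg]
        inv_mem' := by
          intro g hg
          show act' g⁻¹ E = E
          conv_lhs => rw [← hg]
          rw [← act'_mul, inv_mul_cancel, act'_one] }
    apply Set.eq_of_subset_of_subset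
    · -- stabilizer ⊆ closure
      intro h hh
      simp only [Set.mem_setOf_eq, hact] at hh
      rw [act'_E] at hh
      set A : Matrix (Fin 2) (Fin 2) (ZMod p) := (h : Matrix (Fin 2) (Fin 2) (ZMod p)) with hA
      have hdet : A.det ≠ 0 := det_coe_ne_zero h
      have e00 : A.det⁻¹ * (A 0 0 * A 0 0) = 1 := by
        have := congrFun (congrFun hh 0) 0
        simpa [Matrix.smul_apply, hE] using this
      have e11 : A.det⁻¹ * (A 1 0 * A 1 0) = 0 := by
        have := congrFun (congrFun hh 1) 1
        simpa [Matrix.smul_apply, hE] using this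
      have h10 : A 1 0 = 0 := by
        have h2 : A 1 0 * A 1 0 = 0 := by
          have := mul_eq_zero.mp e11
          rcases this with h' | h'
          · exact absurd (inv_eq_zero.mp h') hdet
          · exact h'
        exact mul_self_eq_zero.mp h2
      have hdet2 : A.det = A 0 0 * A 1 1 := by
        rw [Matrix.det_fin_two, h10, mul_zero, sub_zero]
      have hs : A 0 0 ≠ 0 := by
        intro h0; rw [hdet2, h0, zero_mul] at hdet; exact hdet rfl
      have hsq : A 0 0 * A 0 0 = A.det := by
        field_simp at e00
        linear_combination e00
      have h11 : A 1 1 = A 0 0 := by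
        apply mul_left_cancel₀ hs
        rw [← hdet2, ← hsq]
      -- now h = (s • 1) * U ^ n
      set s := A 0 0 with hsdef
      set w := A 0 1 with hwdef
      have hUd : (!![(1:ZMod p),1;0,1] : Matrix (Fin 2) (Fin 2) (ZMod p)).det ≠ 0 := by
        simp [Matrix.det_fin_two_of]
      have hSd : ((s • (1 : Matrix (Fin 2) (Fin 2) (ZMod p)))).det ≠ 0 := by
        simp [Matrix.det_smul, hs]
      have hUmem : myGL _ hUd ∈ Subgroup.closure gens :=
        Subgroup.subset_closure (Or.inl (myGL_coe _ _))
      have hSmem : myGL _ hSd ∈ Subgroup.closure gens :=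
        Subgroup.subset_closure (Or.inr ⟨s, myGL_coe _ _⟩)
      have key : h = myGL _ hSd * (myGL _ hUd) ^ (w * s⁻¹).val := by
        apply Units.ext
        push_cast [Units.val_pow_eq_pow_val]
        rw [myGL_coe, myGL_coe, unipotent_pow]
        have hcast : (((w * s⁻¹).val : ℕ) : ZMod p) = w * s⁻¹ :=
          ZMod.natCast_rightInverse _
        rw [hcast]
        show A = _
        ext i j
        fin_cases i <;> fin_cases j <;>
          simp [Matrix.mul_apply, Fin.sum_univ_two, ← hsdef, ← hwdef, h10, h11] <;>
          field_simp
      rw [key]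
      exact Subgroup.mul_mem _ hSmem (Subgroup.pow_mem _ hUmem _)
    · -- closure ⊆ stabilizer
      have hle : Subgroup.closure gens ≤ stab := by
        rw [Subgroup.closure_le]
        intro h hh
        show act' h E = E
        rcases hh with h1 | ⟨c, h2⟩
        · rw [act'_E, h1]
          ext i j
          fin_cases i <;> fin_cases j <;>
            simp [Matrix.det_fin_two_of, Matrix.smul_apply, hE]
        · have hc : c ≠ 0 := by
            intro hc0
            have := det_coe_ne_zero h
            rw [h2, hc0, zero_smul, Matrix.det_zero] at this
            · exact this rfl
          rw [act'_E, h2]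
          ext i j
          fin_cases i <;> fin_cases j <;>
            simp [Matrix.det_smul, Matrix.smul_apply, hE, Matrix.one_apply] <;>
            field_simp <;> ring
      intro h hh
      have := hle hh
      simpa [hact] using (show act' h E = E from this)
end

section
/- For every real c > 0, the integral over the upper half plane ∫∫_{y>0, x∈R} exp(−πc(x² + y² + 1)/y) dx dy / y² equals e^{−2πc}/c. -/
open Real MeasureTheory Set

lemma aux_integrableE {a : ℝ} (ha : 0 < a) :
    IntegrableOn (fun t : ℝ => Real.exp (-(a * (t ^ 2 + 1 / t ^ 2)))) (Ioi 0) := by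
  apply Integrable.integrableOn
  apply Integrable.mono' (integrable_exp_neg_mul_sq ha)
  · apply Measurable.aestronglyMeasurable
    fun_prop
  · filter_upwards with t
    rw [Real.norm_eq_abs, abs_of_pos (Real.exp_pos _)]
    apply Real.exp_le_exp.2
    have h : 0 ≤ a * (1 / t ^ 2) := by positivity
    nlinarith

lemma aux_sq_image : (fun t : ℝ => t ^ 2) '' Ioi 0 = Ioi 0 := by
  ext y
  constructor
  · rintro ⟨t, ht, rfl⟩
    exact pow_pos (show (0:ℝ) < t from ht) 2
  · intro hy
    exact ⟨Real.sqrt y, Real.sqrt_pos.2 hy, Real.sq_sqrt (le_of_lt hy)⟩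

lemma aux_invsq_image : (fun t : ℝ => 1 / t ^ 2) '' Ioi 0 = Ioi 0 := by
  ext y
  simp only [mem_image, mem_Ioi]
  constructor
  · rintro ⟨t, ht, rfl⟩
    positivity
  · intro hy
    refine ⟨1 / Real.sqrt y, by positivity, ?_⟩
    rw [div_pow, one_pow, Real.sq_sqrt (le_of_lt hy), one_div_one_div]

lemma aux_sub_image : (fun t : ℝ => t - 1 / t) '' Ioi 0 = univ := by
  apply eq_univ_iff_forall.2
  intro u
  set s := Real.sqrt (u ^ 2 + 4) with hs
  have hs2 : s ^ 2 = u ^ 2 + 4 := Real.sq_sqrt (by positivity)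
  have habs : |u| < s := by
    rw [hs, ← Real.sqrt_sq_eq_abs]
    exact Real.sqrt_lt_sqrt (sq_nonneg u) (by linarith)
  have hu1 : -u < s := by cases abs_lt.1 habs with | intro h1 h2 => linarith
  set t := (u + s) / 2 with htdef
  have ht : 0 < t := by rw [htdef]; linarith
  refine ⟨t, ht, ?_⟩
  have htne : t ≠ 0 := ne_of_gt ht
  show t - 1 / t = u
  field_simp
  rw [htdef]
  nlinarith [hs2]

lemma key (a : ℝ) (ha : 0 < a) :
    ∫ y in Ioi (0:ℝ), Real.exp (-(a * (y + 1 / y))) * (Real.sqrt y / y ^ 2)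
      = Real.exp (-(2 * a)) * Real.sqrt (π / a) := by
  set g : ℝ → ℝ := fun y => Real.exp (-(a * (y + 1 / y))) * (Real.sqrt y / y ^ 2) with hg
  set E : ℝ → ℝ := fun t => Real.exp (-(a * (t ^ 2 + 1 / t ^ 2))) with hE
  -- derivatives
  have hderiv_sq : ∀ t ∈ Ioi (0:ℝ), HasDerivWithinAt (fun t : ℝ => t ^ 2) (2 * t) (Ioi 0) t := by
    intro t ht
    simpa using (hasDerivAt_pow 2 t).hasDerivWithinAt
  have hderiv_invsq : ∀ t ∈ Ioi (0:ℝ),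
      HasDerivWithinAt (fun t : ℝ => 1 / t ^ 2) (-(2 * t) / (t ^ 2) ^ 2) (Ioi 0) t := by
    intro t ht
    have ht0 : (0:ℝ) < t := ht
    have h1 : HasDerivAt (fun t : ℝ => (t ^ 2)⁻¹) (-(2 * t ^ 1) / (t ^ 2) ^ 2) t :=
      (hasDerivAt_pow 2 t).inv (by positivity)
    simp only [one_div, pow_one] at *
    exact h1.hasDerivWithinAt
  have hderiv_sub : ∀ t ∈ Ioi (0:ℝ),
      HasDerivWithinAt (fun t : ℝ => t - 1 / t) (1 + 1 / t ^ 2) (Ioi 0) t := by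
    intro t ht
    have ht0 : (0:ℝ) < t := ht
    have h1 : HasDerivAt (fun t : ℝ => t - t⁻¹) (1 - (-1 / t ^ 2)) t :=
      (hasDerivAt_id t).sub ((hasDerivAt_id t).inv (ne_of_gt ht0))
    have h2 : (1 : ℝ) - (-1 / t ^ 2) = 1 + 1 / t ^ 2 := by ring
    rw [h2] at h1
    simp only [one_div] at h1 ⊢
    exact h1.hasDerivWithinAt
  -- injectivity
  have hinj_sq : InjOn (fun t : ℝ => t ^ 2) (Ioi 0) := by
    intro s hs t ht h
    simp only [mem_Ioi] at hs ht
    simp only at h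
    nlinarith
  have hinj_invsq : InjOn (fun t : ℝ => 1 / t ^ 2) (Ioi 0) := by
    intro s hs t ht h
    simp only [mem_Ioi] at hs ht
    simp only at h
    have hs2 : (0:ℝ) < s ^ 2 := by positivity
    have ht2 : (0:ℝ) < t ^ 2 := by positivity
    have h3 : s ^ 2 = t ^ 2 := by
      field_simp at h
      nlinarith
    nlinarith
  have hinj_sub : InjOn (fun t : ℝ => t - 1 / t) (Ioi 0) := by
    intro s hs t ht h
    simp only [mem_Ioi] at hs ht
    simp only at h
    have hsne : s ≠ 0 := ne_of_gt hs
    have htne : t ≠ 0 := ne_of_gt ht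
    have h2 : s * t * (s - 1/s) = s * t * (t - 1/t) := by rw [h]
    field_simp at h2
    have key2 : (s - t) * (s * t * (s * t + 1)) = 0 := by linear_combination (s * t) * h2
    have hpos : 0 < s * t * (s * t + 1) := by positivity
    rcases mul_eq_zero.1 key2 with h' | h'
    · linarith
    · exact absurd h' (ne_of_gt hpos)
  -- pointwise identities
  have hptB : EqOn (fun t => |(-(2 * t)) / (t ^ 2) ^ 2| • g (1 / t ^ 2))
      (fun t => 2 * E t) (Ioi 0) := by
    intro t ht
    have ht0 : (0:ℝ) < t := ht
    have htne : t ≠ 0 := ne_of_gt ht0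
    have e2 : Real.sqrt (1 / t ^ 2) = 1 / t := by
      rw [one_div, Real.sqrt_inv, Real.sqrt_sq ht0.le, one_div]
    have e3 : |(-(2 * t)) / (t ^ 2) ^ 2| = 2 * t / (t ^ 2) ^ 2 := by
      rw [neg_div, abs_neg, abs_of_pos (by positivity)]
    simp only [smul_eq_mul, hg, hE, e2, e3, one_div_one_div]
    rw [show -(a * (1 / t ^ 2 + t ^ 2)) = -(a * (t ^ 2 + 1 / t ^ 2)) from by ring]
    field_simp
  have hptA : EqOn (fun t => |2 * t| • g (t ^ 2)) (fun t => 2 / t ^ 2 * E t) (Ioi 0) := by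
    intro t ht
    have ht0 : (0:ℝ) < t := ht
    have htne : t ≠ 0 := ne_of_gt ht0
    have e2 : Real.sqrt (t ^ 2) = t := Real.sqrt_sq ht0.le
    have e3 : |2 * t| = 2 * t := abs_of_pos (by positivity)
    simp only [smul_eq_mul, hg, hE, e2, e3]
    field_simp
  have hptC : EqOn (fun t => |1 + 1 / t ^ 2| • Real.exp (-(a * ((t - 1 / t) ^ 2 + 2))))
      (fun t => (1 + 1 / t ^ 2) * E t) (Ioi 0) := by
    intro t ht
    have ht0 : (0:ℝ) < t := ht
    have htne : t ≠ 0 := ne_of_gt ht0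
    have e1 : |1 + 1 / t ^ 2| = 1 + 1 / t ^ 2 := abs_of_pos (by positivity)
    have e0 : (t - 1 / t) ^ 2 + 2 = t ^ 2 + 1 / t ^ 2 := by
      field_simp
      ring
    have e2 : -(a * ((t - 1 / t) ^ 2 + 2)) = -(a * (t ^ 2 + 1 / t ^ 2)) := by rw [e0]
    simp only [smul_eq_mul, hE, e1, e2]
  -- substitutions
  have hB : ∫ y in Ioi (0:ℝ), g y = ∫ t in Ioi (0:ℝ), 2 * E t := by
    have h := integral_image_eq_integral_abs_deriv_smul measurableSet_Ioi hderiv_invsq hinj_invsq g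
    rw [aux_invsq_image] at h
    rw [h]
    exact setIntegral_congr_fun measurableSet_Ioi hptB
  have hA : ∫ y in Ioi (0:ℝ), g y = ∫ t in Ioi (0:ℝ), 2 / t ^ 2 * E t := by
    have h := integral_image_eq_integral_abs_deriv_smul measurableSet_Ioi hderiv_sq hinj_sq g
    rw [aux_sq_image] at h
    rw [h]
    exact setIntegral_congr_fun measurableSet_Ioi hptA
  have hC : ∫ u : ℝ, Real.exp (-(a * (u ^ 2 + 2)))
      = ∫ t in Ioi (0:ℝ), (1 + 1 / t ^ 2) * E t := by
    rw [← setIntegral_univ, ← aux_sub_image,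
      integral_image_eq_integral_abs_deriv_smul measurableSet_Ioi hderiv_sub hinj_sub
        (fun u => Real.exp (-(a * (u ^ 2 + 2))))]
    exact setIntegral_congr_fun measurableSet_Ioi hptC
  -- integrability
  have iE : IntegrableOn E (Ioi 0) := aux_integrableE ha
  have i2E : IntegrableOn (fun t => 2 * E t) (Ioi 0) := iE.const_mul 2
  have ig : IntegrableOn g (Ioi 0) := by
    have h := integrableOn_image_iff_integrableOn_abs_deriv_smul measurableSet_Ioi
      hderiv_invsq hinj_invsq g
    rw [aux_invsq_image] at h
    rw [h]
    exact i2E.congr_fun hptB.symm measurableSet_Ioi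
  have iA : IntegrableOn (fun t => 2 / t ^ 2 * E t) (Ioi 0) := by
    have h := integrableOn_image_iff_integrableOn_abs_deriv_smul measurableSet_Ioi
      hderiv_sq hinj_sq g
    rw [aux_sq_image] at h
    exact (h.1 ig).congr_fun hptA measurableSet_Ioi
  -- combine
  have hsum : (∫ y in Ioi (0:ℝ), g y) + (∫ y in Ioi (0:ℝ), g y)
      = 2 * ∫ t in Ioi (0:ℝ), (1 + 1 / t ^ 2) * E t := by
    nth_rewrite 1 [hB]
    nth_rewrite 1 [hA]
    rw [← integral_add i2E iA]
    rw [show (fun t => 2 * E t + 2 / t ^ 2 * E t) = fun t => 2 * ((1 + 1 / t ^ 2) * E t)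
      from by funext t; ring]
    exact integral_const_mul 2 _
  have hgauss : ∫ u : ℝ, Real.exp (-(a * (u ^ 2 + 2)))
      = Real.exp (-(2 * a)) * Real.sqrt (π / a) := by
    have h1 : ∀ u : ℝ, Real.exp (-(a * (u ^ 2 + 2)))
        = Real.exp (-(2 * a)) * Real.exp (-a * u ^ 2) := by
      intro u
      rw [← Real.exp_add]
      congr 1
      ring
    simp_rw [h1]
    rw [integral_const_mul, integral_gaussian]
  have : ∫ y in Ioi (0:ℝ), g y = ∫ u : ℝ, Real.exp (-(a * (u ^ 2 + 2))) := by
    rw [hC]; linarith [hsum]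
  rw [show (∫ y in Ioi (0:ℝ), Real.exp (-(a * (y + 1 / y))) * (Real.sqrt y / y ^ 2))
    = ∫ y in Ioi (0:ℝ), g y from rfl, this, hgauss]

open Real MeasureTheory in
/-- For every real `c > 0`,
`∫∫_{y>0, x∈ℝ} exp(−πc(x² + y² + 1)/y) dx dy / y² = e^{−2πc}/c`. -/
theorem stmt_9 (c : ℝ) (hc : 0 < c) :
    ∫ y in Set.Ioi (0 : ℝ),
      (∫ x : ℝ, Real.exp (-(π * c * (x ^ 2 + y ^ 2 + 1) / y))) / y ^ 2
      = Real.exp (-(2 * π * c)) / c := by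
  have hπc : 0 < π * c := mul_pos Real.pi_pos hc
  have hcne : c ≠ 0 := ne_of_gt hc
  have hstep : ∀ y ∈ Set.Ioi (0:ℝ),
      (∫ x : ℝ, Real.exp (-(π * c * (x ^ 2 + y ^ 2 + 1) / y))) / y ^ 2
      = Real.exp (-(π * c * (y + 1 / y))) * (Real.sqrt y / y ^ 2) * (Real.sqrt c)⁻¹ := by
    intro y hy
    have hy0 : (0:ℝ) < y := hy
    have hyne : y ≠ 0 := ne_of_gt hy0
    have hinner : (∫ x : ℝ, Real.exp (-(π * c * (x ^ 2 + y ^ 2 + 1) / y)))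
        = Real.sqrt (π / (π * c / y)) * Real.exp (-(π * c * (y ^ 2 + 1) / y)) := by
      have h1 : ∀ x : ℝ, Real.exp (-(π * c * (x ^ 2 + y ^ 2 + 1) / y))
          = Real.exp (-(π * c / y) * x ^ 2) * Real.exp (-(π * c * (y ^ 2 + 1) / y)) := by
        intro x
        rw [← Real.exp_add]
        congr 1
        field_simp
        ring
      simp_rw [h1]
      rw [MeasureTheory.integral_mul_const, integral_gaussian]
    rw [hinner]
    have h2 : Real.sqrt (π / (π * c / y)) = Real.sqrt y / Real.sqrt c := by
      rw [show π / (π * c / y) = y / c from by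
        field_simp [Real.pi_ne_zero], Real.sqrt_div hy0.le]
    have h5 : π * c * (y ^ 2 + 1) / y = π * c * (y + 1 / y) := by
      field_simp
    rw [h2, h5]
    ring
  rw [MeasureTheory.setIntegral_congr_fun measurableSet_Ioi hstep,
    MeasureTheory.integral_mul_const, key (π * c) hπc]
  have h3 : Real.sqrt (π / (π * c)) = (Real.sqrt c)⁻¹ := by
    rw [show π / (π * c) = c⁻¹ from by field_simp [Real.pi_ne_zero], Real.sqrt_inv]
  rw [h3, show -(2 * (π * c)) = -(2 * π * c) from by ring, mul_assoc,
    show (Real.sqrt c)⁻¹ * (Real.sqrt c)⁻¹ = c⁻¹ from by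
      rw [← mul_inv, Real.mul_self_sqrt hc.le], ← div_eq_mul_inv]
end
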